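/- Let R be a one-dimensional Noetherian domain in which every nonzero ideal is contained in only finitely many prime ideals. Then every invertible ideal a ⊆ R can be generated by two elements; moreover, for any nonzero a ∈ a there exists b ∈ a with a = (a, b). -/

import Mathlib

open FractionalIdeal

lemma crt_idem {R : Type*} [CommRing R] {ι : Type*} [DecidableEq ι] (s : Finset ι)
    (p : ι → Ideal R) (h : ∀ i ∈ s, ∀ j ∈ s, i ≠ j → IsCoprime (p i) (p j))
    {i : ι} (hi : i ∈ s) :
    ∃ e : R, e - 1 ∈ p i ∧ ∀ j ∈ s, j ≠ i → e ∈ p j := by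
  have hco : ∀ j ∈ s.erase i, IsCoprime (p i) (p j) := fun j hj =>
    h i hi j (Finset.mem_of_mem_erase hj) (Finset.ne_of_mem_erase hj).symm
  obtain ⟨u, hu, e, he, hue⟩ := Ideal.isCoprime_iff_exists.mp (Ideal.isCoprime_biInf hco)
  refine ⟨e, ?_, ?_⟩
  · have : e - 1 = -u := by linear_combination hue
    rw [this]; exact neg_mem hu
  · intro j hj hji
    have : e ∈ ⨅ j ∈ s.erase i, p j := he
    simp only [Ideal.mem_iInf] at this
    exact this j (Finset.mem_erase.mpr ⟨hji, hj⟩)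

lemma main_aux {R K : Type*} [CommRing R] [IsDomain R] [IsNoetherianRing R]
    [Field K] [Algebra R K] [IsFractionRing R K]
    (hdim : ∀ p : Ideal R, p.IsPrime → p ≠ ⊥ → p.IsMaximal)
    (hfinprimes : ∀ J : Ideal R, J ≠ ⊥ → {p : Ideal R | p.IsPrime ∧ J ≤ p}.Finite)
    (I : Ideal R)
    (hI : IsUnit (I : FractionalIdeal (nonZeroDivisors R) K))
    {a : R} (haI : a ∈ I) (ha0 : a ≠ 0) :
    ∃ b ∈ I, I = Ideal.span {a, b} := by
  classical
  obtain ⟨u, hu⟩ := hI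
  set I' : FractionalIdeal (nonZeroDivisors R) K := (I : FractionalIdeal (nonZeroDivisors R) K)
    with hI'def
  set v : FractionalIdeal (nonZeroDivisors R) K :=
    ((u⁻¹ : _ˣ) : FractionalIdeal (nonZeroDivisors R) K) with hvdef
  have huv : I' * v = 1 := by rw [← hu, hvdef]; exact u.mul_inv
  have hvu : v * (u : FractionalIdeal (nonZeroDivisors R) K) = 1 := u.inv_mul
  set sA : FractionalIdeal (nonZeroDivisors R) K := spanSingleton (nonZeroDivisors R)
    (algebraMap R K a) with hsAdef
  have haI' : algebraMap R K a ∈ I' := by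
    rw [hI'def, mem_coeIdeal]; exact ⟨a, haI, rfl⟩
  have hsA_le : sA ≤ I' := spanSingleton_le_iff_mem.mpr haI'
  have hJle : sA * v ≤ 1 := by
    calc sA * v ≤ I' * v := mul_le_mul_left hsA_le v
    _ = 1 := huv
  obtain ⟨J, hJ⟩ := le_one_iff_exists_coeIdeal.mp hJle
  have hamap0 : algebraMap R K a ≠ 0 := fun h =>
    ha0 (IsFractionRing.injective R K (h.trans (_root_.map_zero _).symm))
  have hJne : J ≠ ⊥ := by
    intro h0
    have h1 : sA * v * I' = 0 := by rw [← hJ, h0]; simp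
    have hvI : v * I' = 1 := by rw [mul_comm]; exact huv
    rw [mul_assoc, hvI, mul_one] at h1
    exact hamap0 (spanSingleton_eq_zero_iff.mp h1)
  set s : Finset (Ideal R) := (hfinprimes J hJne).toFinset with hsdef
  have hmem : ∀ p, p ∈ s ↔ p.IsPrime ∧ J ≤ p := by
    intro p; rw [hsdef, Set.Finite.mem_toFinset]; rfl
  have hmax : ∀ p ∈ s, p.IsMaximal := by
    intro p hp
    obtain ⟨hprime, hle⟩ := (hmem p).mp hp
    refine hdim p hprime fun hbot => hJne (le_bot_iff.mp (hbot ▸ hle))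
  -- local generators
  have hxy : ∀ p ∈ s, ∃ x ∈ I, ∃ y ∈ v, ∃ r : R, r ∉ p ∧
      algebraMap R K r = algebraMap R K x * y := by
    intro p hp
    have hprime := ((hmem p).mp hp).1
    by_contra hcon
    push_neg at hcon
    have hle : I' * v ≤ (p : FractionalIdeal (nonZeroDivisors R) K) := by
      rw [mul_le]
      intro i hi j hj
      rw [hI'def, mem_coeIdeal] at hi
      obtain ⟨x, hxI, rfl⟩ := hi
      have hin1 : algebraMap R K x * j ∈ (1 : FractionalIdeal (nonZeroDivisors R) K) := by
        rw [← huv]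
        exact mul_mem_mul (by rw [hI'def, mem_coeIdeal]; exact ⟨x, hxI, rfl⟩) hj
      obtain ⟨r, hr⟩ := (mem_one_iff _).mp hin1
      have hrp : r ∈ p := by
        by_contra hnp
        exact hcon x hxI j hj r hnp hr
      rw [mem_coeIdeal]
      exact ⟨r, hrp, hr⟩
    rw [huv] at hle
    have := (coeIdeal_le_coeIdeal K).mp (by rw [coeIdeal_top]; exact hle :
      ((⊤ : Ideal R) : FractionalIdeal (nonZeroDivisors R) K) ≤ ↑p)
    exact hprime.ne_top (top_le_iff.mp this)
  choose! x hxI y hyv r hrp hr using hxy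
  -- CRT idempotents
  have hcop : ∀ i ∈ s, ∀ j ∈ s, i ≠ j → IsCoprime (id i : Ideal R) (id j) := by
    intro i hi j hj hij
    exact Ideal.isCoprime_iff_sup_eq.mpr ((hmax i hi).coprime_of_ne (hmax j hj) hij)
  have he : ∀ p ∈ s, ∃ e : R, e - 1 ∈ p ∧ ∀ q ∈ s, q ≠ p → e ∈ q := fun p hp =>
    crt_idem s id hcop hp
  choose! e he1 he2 using he
  refine ⟨∑ p ∈ s, e p * x p, Ideal.sum_mem _ fun p hp => I.mul_mem_left _ (hxI p hp), ?_⟩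
  set b : R := ∑ p ∈ s, e p * x p with hbdef
  have hbI : b ∈ I := Ideal.sum_mem _ fun p hp => I.mul_mem_left _ (hxI p hp)
  set sB : FractionalIdeal (nonZeroDivisors R) K := spanSingleton (nonZeroDivisors R)
    (algebraMap R K b) with hsBdef
  have hsB_le : sB ≤ I' := spanSingleton_le_iff_mem.mpr (by rw [hI'def, mem_coeIdeal]; exact ⟨b, hbI, rfl⟩)
  have hJ'le : sB * v ≤ 1 := by
    calc sB * v ≤ I' * v := mul_le_mul_left hsB_le v
    _ = 1 := huv
  obtain ⟨J', hJ'⟩ := le_one_iff_exists_coeIdeal.mp hJ'le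
  have key : J ⊔ J' = ⊤ := by
    by_contra hne
    obtain ⟨m, hm, hlem⟩ := Ideal.exists_le_maximal _ hne
    have hms : m ∈ s := (hmem m).mpr ⟨hm.isPrime, le_trans le_sup_left hlem⟩
    -- products x p * y m come from R
    have ht : ∀ p ∈ s, ∃ t : R, algebraMap R K t = algebraMap R K (x p) * y m := by
      intro p hp
      have hin1 : algebraMap R K (x p) * y m ∈ (1 : FractionalIdeal (nonZeroDivisors R) K) := by
        rw [← huv]
        exact mul_mem_mul (by rw [hI'def, mem_coeIdeal]; exact ⟨x p, hxI p hp, rfl⟩) (hyv m hms)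
      exact (mem_one_iff _).mp hin1
    choose! t htt using ht
    have hbym : algebraMap R K b * y m ∈ (J' : FractionalIdeal (nonZeroDivisors R) K) := by
      rw [hJ']
      exact mul_mem_mul (mem_spanSingleton_self _ _) (hyv m hms)
    rw [mem_coeIdeal] at hbym
    obtain ⟨c, hcJ', hc⟩ := hbym
    have hcsum : c = ∑ p ∈ s, e p * t p := by
      apply IsFractionRing.injective R K
      rw [hc, hbdef, map_sum, map_sum, Finset.sum_mul]
      refine Finset.sum_congr rfl fun p hp => ?_
      rw [_root_.map_mul, _root_.map_mul, mul_assoc, htt p hp]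
    have hcm : c ∈ m := hlem (Ideal.mem_sup_right hcJ')
    rw [hcsum] at hcm
    have hrest : ∑ p ∈ s.erase m, e p * t p ∈ m :=
      Ideal.sum_mem _ fun p hp =>
        m.mul_mem_right _ (he2 p (Finset.mem_of_mem_erase hp) m hms (Finset.ne_of_mem_erase hp).symm)
    have hsplit : ∑ p ∈ s, e p * t p = e m * t m + ∑ p ∈ s.erase m, e p * t p :=
      (Finset.add_sum_erase s _ hms).symm
    have hemtm : e m * t m ∈ m := by
      have := hcm
      rw [hsplit] at this
      have h2 := m.sub_mem this hrest
      simpa using h2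
    have htm : t m ∈ m := by
      have h3 : t m = e m * t m - (e m - 1) * t m := by ring
      rw [h3]
      exact m.sub_mem hemtm (m.mul_mem_right _ (he1 m hms))
    have htr : t m = r m := IsFractionRing.injective R K ((htt m hms).trans (hr m hms).symm)
    exact hrp m hms (htr ▸ htm)
  have hfin : (sA + sB) * v = 1 := by
    rw [add_mul, ← hJ, ← hJ', ← coeIdeal_sup, key, coeIdeal_top]
  have hsum : sA + sB = I' := by
    calc sA + sB = (sA + sB) * (v * (u : FractionalIdeal (nonZeroDivisors R) K)) := by
          rw [hvu, mul_one]
    _ = ((sA + sB) * v) * (u : FractionalIdeal (nonZeroDivisors R) K) := (mul_assoc _ _ _).symm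
    _ = 1 * (u : FractionalIdeal (nonZeroDivisors R) K) := by rw [hfin]
    _ = I' := by rw [one_mul, hu]
  have hspan : ((Ideal.span {a, b} : Ideal R) : FractionalIdeal (nonZeroDivisors R) K) = ↑I := by
    rw [show ({a, b} : Set R) = insert a {b} from rfl, Ideal.span_insert, coeIdeal_sup,
      coeIdeal_span_singleton, coeIdeal_span_singleton]
    exact hsum.trans hI'def
  exact (coeIdeal_injective hspan).symm

/-- Let `R` be a one-dimensional Noetherian domain in which every nonzero ideal is
contained in only finitely many primes.  Then every invertible ideal `I ⊆ R` is
generated by two elements; moreover any nonzero `a ∈ I` can be taken as one of the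
generators. -/
theorem stmt_8 {R K : Type*} [CommRing R] [IsDomain R] [IsNoetherianRing R]
    [Field K] [Algebra R K] [IsFractionRing R K]
    (hdim : ∀ p : Ideal R, p.IsPrime → p ≠ ⊥ → p.IsMaximal)
    (hfinprimes : ∀ J : Ideal R, J ≠ ⊥ → {p : Ideal R | p.IsPrime ∧ J ≤ p}.Finite)
    (I : Ideal R)
    (hI : IsUnit (I : FractionalIdeal (nonZeroDivisors R) K)) :
    (∃ x y : R, I = Ideal.span {x, y}) ∧
      ∀ a ∈ I, a ≠ 0 → ∃ b ∈ I, I = Ideal.span {a, b} := by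
  have hIbot : I ≠ ⊥ := by
    intro h0
    rw [h0] at hI
    rw [coeIdeal_bot] at hI
    have h01 : (0 : FractionalIdeal (nonZeroDivisors R) K) = 1 := isUnit_zero_iff.mp hI
    have := coeIdeal_injective (K := K) (by rw [coeIdeal_bot, coeIdeal_top]; exact h01 :
      ((⊥ : Ideal R) : FractionalIdeal (nonZeroDivisors R) K) = ((⊤ : Ideal R) : _))
    exact one_ne_zero (show (1:R) = 0 from (Submodule.eq_bot_iff _).mp this.symm 1 trivial)
  obtain ⟨a, haI, ha0⟩ := Submodule.exists_mem_ne_zero_of_ne_bot hIbot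
  refine ⟨?_, fun a' ha'I ha'0 => main_aux hdim hfinprimes I hI ha'I ha'0⟩
  obtain ⟨b, _, hab⟩ := main_aux hdim hfinprimes I hI haI ha0
  exact ⟨a, b, hab⟩
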